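/- Let P and Q be the 2×8 matrices over 𝔽₂ with P = [[1,0,1,0,1,0,1,0],[0,1,0,1,0,1,0,1]] and Q = [[0,0,0,0,1,1,1,0],[1,1,1,1,0,0,0,1]], and let Δ = [[P, I₂],[Q, I₂]] be the corresponding 4×10 block matrix. Then the kernel of the linear map 𝔽₂¹⁰ → 𝔽₂⁴ determined by Δ has dimension 7, and the quotient of 𝔽₂⁴ by its range has dimension 1. (H⁰ of the switching sheaf of the R-S flip-flop has dimension 7 and H¹ has dimension 1.) -/
import Mathlib


/-- The field with two elements. -/
notation "𝔽₂" => ZMod 2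

/-- The restriction matrix `P` of the R-S flip-flop: restriction from `H⁰(A)` to
the input that the feedback wire connects. -/
def rsP : Matrix (Fin 2) (Fin 8) 𝔽₂ :=
  !![1,0,1,0,1,0,1,0;
     0,1,0,1,0,1,0,1]

/-- The restriction matrix `Q` of the R-S flip-flop: restriction from `H⁰(A)` to
the output that the feedback wire connects. -/
def rsQ : Matrix (Fin 2) (Fin 8) 𝔽₂ :=
  !![0,0,0,0,1,1,1,0;
     1,1,1,1,0,0,0,1]

/-- The 4×10 Mayer–Vietoris difference matrix `Δ = [[P, I₂],[Q, I₂]]` of the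
R-S flip-flop. -/
def rsDelta : Matrix (Fin 2 ⊕ Fin 2) (Fin 8 ⊕ Fin 2) 𝔽₂ :=
  Matrix.fromBlocks rsP (1 : Matrix (Fin 2) (Fin 2) 𝔽₂)
    rsQ (1 : Matrix (Fin 2) (Fin 2) 𝔽₂)


/-- The coordinate-sum functional on `𝔽₂⁴`. -/
def rsPhi : (Fin 2 ⊕ Fin 2 → 𝔽₂) →ₗ[𝔽₂] 𝔽₂ where
  toFun v := ∑ i, v i
  map_add' x y := by simp [Finset.sum_add_distrib]
  map_smul' c x := by simp [Finset.mul_sum]; ring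

lemma rs_range_le_ker_phi :
    LinearMap.range rsDelta.mulVecLin ≤ LinearMap.ker rsPhi := by
  rintro _ ⟨x, rfl⟩
  simp only [LinearMap.mem_ker, rsPhi, LinearMap.coe_mk, AddHom.coe_mk]
  show ∑ i, rsDelta.mulVec x i = 0
  simp only [Matrix.mulVec, dotProduct]
  rw [Finset.sum_comm]
  apply Finset.sum_eq_zero
  intro j _
  rw [← Finset.sum_mul]
  have : ∑ i, rsDelta i j = 0 := by revert j; decide
  rw [this, zero_mul]

def rsU : Fin 3 → (Fin 8 ⊕ Fin 2 → 𝔽₂) :=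
  ![fun j => if j = Sum.inl 0 then 1 else 0,
    fun j => if j = Sum.inr 0 then 1 else 0,
    fun j => if j = Sum.inr 1 then 1 else 0]

lemma rs_li : LinearIndependent 𝔽₂ (fun i => rsDelta.mulVecLin (rsU i)) := by
  rw [Fintype.linearIndependent_iff]
  decide

lemma rs_finrank_ker_phi : Module.finrank 𝔽₂ (LinearMap.ker rsPhi) = 3 := by
  have hsurj : LinearMap.range rsPhi = ⊤ := by
    rw [eq_top_iff]
    rintro c -
    exact ⟨fun j => if j = Sum.inl 0 then c else 0, by
      simp [rsPhi, Finset.sum_ite_eq']⟩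
  have h := LinearMap.finrank_range_add_finrank_ker rsPhi
  rw [hsurj] at h
  simp only [finrank_top, Module.finrank_self] at h
  have hdom : Module.finrank 𝔽₂ (Fin 2 ⊕ Fin 2 → 𝔽₂) = 4 := by
    simp [Module.finrank_pi]
  omega

lemma rs_rank : Module.finrank 𝔽₂ (LinearMap.range rsDelta.mulVecLin) = 3 := by
  have hle : Module.finrank 𝔽₂ (LinearMap.range rsDelta.mulVecLin) ≤ 3 := by
    rw [← rs_finrank_ker_phi]
    exact Submodule.finrank_mono rs_range_le_ker_phi
  have hge : 3 ≤ Module.finrank 𝔽₂ (LinearMap.range rsDelta.mulVecLin) := by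
    have hspan : Submodule.span 𝔽₂ (Set.range fun i => rsDelta.mulVecLin (rsU i)) ≤
        LinearMap.range rsDelta.mulVecLin := by
      rw [Submodule.span_le]
      rintro _ ⟨i, rfl⟩
      exact ⟨rsU i, rfl⟩
    have := finrank_span_eq_card rs_li
    calc (3 : ℕ) = Module.finrank 𝔽₂
          (Submodule.span 𝔽₂ (Set.range fun i => rsDelta.mulVecLin (rsU i))) := by
            rw [this]; simp
      _ ≤ _ := Submodule.finrank_mono hspan
  omega

/-- the kernel of the linear map `𝔽₂¹⁰ → 𝔽₂⁴` determined by the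
Mayer–Vietoris matrix `Δ` of the R-S flip-flop has dimension 7, and the
quotient of `𝔽₂⁴` by its range has dimension 1 (so `H⁰` has dimension 7 and
`H¹` has dimension 1). -/
theorem rs_flipflop_H0_H1 :
    Module.finrank 𝔽₂ (LinearMap.ker rsDelta.mulVecLin) = 7 ∧
      Module.finrank 𝔽₂
        ((Fin 2 ⊕ Fin 2 → 𝔽₂) ⧸ LinearMap.range rsDelta.mulVecLin) = 1 := by
  have h1 := LinearMap.finrank_range_add_finrank_ker rsDelta.mulVecLin
  have h2 := Submodule.finrank_quotient_add_finrank (LinearMap.range rsDelta.mulVecLin)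
  have hdom : Module.finrank 𝔽₂ (Fin 8 ⊕ Fin 2 → 𝔽₂) = 10 := by
    simp [Module.finrank_pi]
  have hcod : Module.finrank 𝔽₂ (Fin 2 ⊕ Fin 2 → 𝔽₂) = 4 := by
    simp [Module.finrank_pi]
  rw [hdom, rs_rank] at h1
  rw [hcod, rs_rank] at h2
  omega
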